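/- arXiv:1509.05444 — 2 statements merged into one kernel-verified Lean document; each statement's English description precedes it below -/
import Mathlib

section
/- There exists R₀ > 1 such that for all R > R₀ and every w ∈ V⁺, writing H⁻ⁿ(w) = (xₙ,yₙ,zₙ): |zₙ| → ∞, xₙ/zₙ → 0 and yₙ/zₙ → 0 as n → ∞; equivalently, the backward orbit H⁻ⁿ(w) converges in complex projective 3-space ℙ³ (under the embedding (x,y,z) ↦ [x:y:z:1]) to the point [0:0:1:0]. -/
open Complex Filter Topology

/-- The quadratic automorphism `H(x,y,z) = (xy + az, x² + by, x)` of `ℂ³`. -/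
noncomputable def H (a b : ℂ) (w : ℂ × ℂ × ℂ) : ℂ × ℂ × ℂ :=
  (w.1 * w.2.1 + a * w.2.2, w.1 ^ 2 + b * w.2.1, w.1)

/-- The inverse automorphism
`H⁻¹(x,y,z) = (z, (y − z²)/b, (x − z(y − z²)/b)/a)`. -/
noncomputable def Hinv (a b : ℂ) (w : ℂ × ℂ × ℂ) : ℂ × ℂ × ℂ :=
  (w.2.2, (w.2.1 - w.2.2 ^ 2) / b,
    (w.1 - w.2.2 * ((w.2.1 - w.2.2 ^ 2) / b)) / a)

/-- `V⁺ = {(x,y,z) : |z| > max{R, |x|, (1+δ)|y|^{1/2}}}`. -/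
def Vplus (δ R : ℝ) : Set (ℂ × ℂ × ℂ) :=
  {w | ‖w.2.2‖ >
    max R (max ‖w.1‖ ((1 + δ) * Real.sqrt ‖w.2.1‖))}

/-- `U⁻ = ⋃_{n≥0} Hⁿ(V⁺)`. -/
noncomputable def Uminus (a b : ℂ) (δ R : ℝ) : Set (ℂ × ℂ × ℂ) :=
  ⋃ n : ℕ, (H a b)^[n] '' Vplus δ R

/-- `K⁻ = ℂ³ \ U⁻`. -/
noncomputable def Kminus (a b : ℂ) (δ R : ℝ) : Set (ℂ × ℂ × ℂ) :=
  (Uminus a b δ R)ᶜ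

set_option maxHeartbeats 800000 in
private lemma key_step (a b : ℂ) (ha : a ≠ 0) (δ : ℝ) (hδ : 0 < δ)
    (hb : ‖b‖ = 1 + δ) (R : ℝ) (hR : 0 < R)
    (hRc : 2 + 2 * ‖a‖ * max 2 ((1 + δ) * Real.sqrt 2) ≤
      (2 * δ + δ ^ 2) / (1 + δ) ^ 3 * R ^ 2)
    (w : ℂ × ℂ × ℂ) (hw : w ∈ Vplus δ R) :
    Hinv a b w ∈ Vplus δ R ∧
    2 * ‖w.2.2‖ ≤ ‖(Hinv a b w).2.2‖ ∧
    (2 * δ + δ ^ 2) / (1 + δ) ^ 3 * ‖w.2.2‖ ^ 3 ≤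
      2 * ‖a‖ * ‖(Hinv a b w).2.2‖ ∧
    ‖(Hinv a b w).2.1‖ ≤ 2 * ‖w.2.2‖ ^ 2 ∧
    (Hinv a b w).1 = w.2.2 := by
  obtain ⟨x, y, z⟩ := w
  simp only [Vplus, Set.mem_setOf_eq, max_lt_iff, gt_iff_lt] at hw
  obtain ⟨hzR, hzx, hzy⟩ := hw
  simp only [Hinv]
  set A := ‖a‖ with hAdef
  set M := max 2 ((1 + δ) * Real.sqrt 2) with hMdef
  set c := (2 * δ + δ ^ 2) / (1 + δ) ^ 3 with hcdef
  have hP0 : (0:ℝ) < 1 + δ := by linarith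
  have hA0 : 0 < A := norm_pos_iff.mpr ha
  have hM2 : (2:ℝ) ≤ M := le_max_left _ _
  have hc0 : 0 < c := by
    apply div_pos (by nlinarith) (by positivity)
  have hz0 : 0 < ‖z‖ := hR.trans hzR
  -- squared y bound
  have hy2 : (1 + δ) ^ 2 * ‖y‖ < ‖z‖ ^ 2 := by
    have hs : Real.sqrt (‖y‖) ^ 2 = ‖y‖ :=
      Real.sq_sqrt (norm_nonneg y)
    have hs0 : 0 ≤ Real.sqrt (‖y‖) := Real.sqrt_nonneg _
    have h0 : 0 ≤ (1 + δ) * Real.sqrt (‖y‖) := by positivity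
    have h1 := mul_self_lt_mul_self h0 hzy
    nlinarith [h1, hs]
  have hy1 : ‖y‖ < ‖z‖ ^ 2 := by
    nlinarith [norm_nonneg y]
  -- y' facts
  set y' : ℂ := (y - z ^ 2) / b with hy'def
  have hy'eq : (1 + δ) * ‖y'‖ = ‖y - z ^ 2‖ := by
    rw [hy'def, norm_div, hb]
    field_simp
  have hsub_lo : ‖z‖ ^ 2 - ‖y‖ ≤ ‖y - z ^ 2‖ := by
    have h1 : ‖z ^ 2‖ - ‖y‖ ≤ ‖y - z ^ 2‖ := by
      rw [norm_sub_rev]; exact norm_sub_norm_le _ _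
    simpa [norm_pow] using h1
  have hsub_hi : ‖y - z ^ 2‖ ≤ ‖y‖ + ‖z‖ ^ 2 := by
    have h1 : ‖y - z ^ 2‖ ≤ ‖y‖ + ‖z ^ 2‖ := norm_sub_le _ _
    simpa [norm_pow] using h1
  have hy'0 : 0 ≤ ‖y'‖ := norm_nonneg _
  have hy'lo : c * ‖z‖ ^ 2 ≤ ‖y'‖ := by
    rw [hcdef, div_mul_eq_mul_div, div_le_iff₀ (by positivity)]
    have h2 : (1 + δ) ^ 2 * (‖z‖ ^ 2 - ‖y‖) ≤
        (1 + δ) ^ 2 * ‖y - z ^ 2‖ :=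
      mul_le_mul_of_nonneg_left hsub_lo (by positivity)
    nlinarith [hy'eq, h2, hy2, sq_nonneg (1 + δ)]
  have hy'hi : ‖y'‖ ≤ 2 * ‖z‖ ^ 2 := by
    nlinarith [hy'eq, hsub_hi, hy1, hy'0]
  -- z' facts
  set z' : ℂ := (x - z * y') / a with hz'def
  have hz'eq : A * ‖z'‖ = ‖x - z * y'‖ := by
    rw [hz'def, norm_div, hAdef]
    field_simp
  have hlo2 : ‖z‖ * ‖y'‖ - ‖x‖ ≤ ‖x - z * y'‖ := by
    have h1 : ‖z * y'‖ - ‖x‖ ≤ ‖x - z * y'‖ := by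
      rw [norm_sub_rev]; exact norm_sub_norm_le _ _
    simpa [norm_mul] using h1
  have hkey : c * ‖z‖ ^ 3 - ‖z‖ ≤ A * ‖z'‖ := by
    have h3 : c * ‖z‖ ^ 3 ≤ ‖z‖ * ‖y'‖ := by
      calc c * ‖z‖ ^ 3 = ‖z‖ * (c * ‖z‖ ^ 2) := by ring
        _ ≤ ‖z‖ * ‖y'‖ := mul_le_mul_of_nonneg_left hy'lo hz0.le
    linarith [hlo2, hzx, hz'eq.le, hz'eq.ge]
  have hcz : 2 + 2 * A * M ≤ c * ‖z‖ ^ 2 := by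
    refine hRc.trans ?_
    have h0 : R ^ 2 ≤ ‖z‖ ^ 2 := pow_le_pow_left₀ hR.le hzR.le 2
    exact mul_le_mul_of_nonneg_left h0 hc0.le
  have hAM : 0 ≤ A * M := by positivity
  have h4 : (2 + 2 * A * M) * ‖z‖ ≤ c * ‖z‖ ^ 2 * ‖z‖ :=
    mul_le_mul_of_nonneg_right hcz hz0.le
  have hAMZ : 0 ≤ A * M * ‖z‖ := mul_nonneg hAM hz0.le
  have hgrow : M * ‖z‖ < ‖z'‖ := by
    have h5 : A * (M * ‖z‖) < A * ‖z'‖ := by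
      linarith [hkey, h4, hAMZ, hz0]
    exact lt_of_mul_lt_mul_left h5 hA0.le
  have hMZ : 2 * ‖z‖ ≤ M * ‖z‖ :=
    mul_le_mul_of_nonneg_right hM2 hz0.le
  have h2z : 2 * ‖z‖ ≤ ‖z'‖ := by linarith
  refine ⟨?_, h2z, ?_, hy'hi, trivial⟩
  · simp only [Vplus, Set.mem_setOf_eq, max_lt_iff, gt_iff_lt]
    refine ⟨by linarith, by linarith, ?_⟩
    have hsq : Real.sqrt (‖y'‖) ≤ Real.sqrt 2 * ‖z‖ := by
      have : Real.sqrt 2 * ‖z‖ = Real.sqrt (2 * ‖z‖ ^ 2) := by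
        rw [Real.sqrt_mul (by norm_num), Real.sqrt_sq hz0.le]
      rw [this]
      exact Real.sqrt_le_sqrt hy'hi
    calc (1 + δ) * Real.sqrt (‖y'‖)
        ≤ (1 + δ) * (Real.sqrt 2 * ‖z‖) :=
          mul_le_mul_of_nonneg_left hsq hP0.le
      _ = ((1 + δ) * Real.sqrt 2) * ‖z‖ := by ring
      _ ≤ M * ‖z‖ := mul_le_mul_of_nonneg_right (le_max_right _ _) hz0.le
      _ < ‖z'‖ := hgrow
  · -- c * |z|^3 ≤ 2A * |z'|
    linarith [hkey, h4, hAMZ, hz0]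

/-- there exists `R₀ > 1` such that for all `R > R₀` and every
`w ∈ V⁺`, writing `H⁻ⁿ(w) = (xₙ,yₙ,zₙ)`: `|zₙ| → ∞`, `xₙ/zₙ → 0` and
`yₙ/zₙ → 0` as `n → ∞`; i.e. the backward orbit converges in `ℙ³` to
`[0:0:1:0]`. -/
theorem stmt3 (a b : ℂ) (ha : a ≠ 0) (hb : b ≠ 0) (δ : ℝ) (hδ : 0 < δ)
    (hbδ : ‖b‖ = 1 + δ) :
    ∃ R₀ > (1 : ℝ), ∀ R > R₀, ∀ w ∈ Vplus δ R,
      Tendsto (fun n : ℕ => ‖((Hinv a b)^[n] w).2.2‖) atTop atTop ∧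
      Tendsto (fun n : ℕ => ((Hinv a b)^[n] w).1 / ((Hinv a b)^[n] w).2.2)
        atTop (nhds 0) ∧
      Tendsto (fun n : ℕ => ((Hinv a b)^[n] w).2.1 / ((Hinv a b)^[n] w).2.2)
        atTop (nhds 0) := by
  set A := ‖a‖ with hAdef
  set M := max 2 ((1 + δ) * Real.sqrt 2) with hMdef
  set c := (2 * δ + δ ^ 2) / (1 + δ) ^ 3 with hcdef
  have hA0 : 0 < A := norm_pos_iff.mpr ha
  have hM2 : (2:ℝ) ≤ M := le_max_left _ _
  have hc0 : 0 < c := div_pos (by nlinarith) (by positivity)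
  have hq0 : (0:ℝ) ≤ (2 + 2 * A * M) / c := by positivity
  refine ⟨Real.sqrt ((2 + 2 * A * M) / c) + 2, by nlinarith [Real.sqrt_nonneg ((2 + 2 * A * M) / c)], ?_⟩
  intro R hR w hw
  have hsq0 : 0 ≤ Real.sqrt ((2 + 2 * A * M) / c) := Real.sqrt_nonneg _
  have hR0 : 0 < R := by linarith
  have hRc : 2 + 2 * A * M ≤ c * R ^ 2 := by
    have h1 : Real.sqrt ((2 + 2 * A * M) / c) < R := by linarith
    have h2 : (2 + 2 * A * M) / c < R ^ 2 := by
      nlinarith [Real.sq_sqrt hq0, hsq0]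
    rw [div_lt_iff₀ hc0] at h2
    linarith
  -- invariant
  have inv : ∀ n : ℕ, (Hinv a b)^[n] w ∈ Vplus δ R ∧
      2 ^ n * R ≤ ‖((Hinv a b)^[n] w).2.2‖ := by
    intro n
    induction n with
    | zero =>
      refine ⟨hw, ?_⟩
      simp only [Function.iterate_zero, id_eq, pow_zero, one_mul]
      have := hw
      simp only [Vplus, Set.mem_setOf_eq, max_lt_iff, gt_iff_lt] at this
      exact this.1.le
    | succ n ih =>
      have step := key_step a b ha δ hδ hbδ R hR0 hRc _ ih.1
      rw [Function.iterate_succ_apply']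
      refine ⟨step.1, ?_⟩
      calc (2:ℝ) ^ (n+1) * R = 2 * (2 ^ n * R) := by ring
        _ ≤ 2 * ‖((Hinv a b)^[n] w).2.2‖ := by linarith [ih.2]
        _ ≤ _ := step.2.1
  have hzpos : ∀ n : ℕ, 0 < ‖((Hinv a b)^[n] w).2.2‖ := fun n =>
    lt_of_lt_of_le (by positivity) (inv n).2
  have hzinf : Tendsto (fun n : ℕ => ‖((Hinv a b)^[n] w).2.2‖) atTop atTop := by
    apply tendsto_atTop_mono (fun n => (inv n).2)
    exact Tendsto.atTop_mul_const hR0 (tendsto_pow_atTop_atTop_of_one_lt one_lt_two)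
  refine ⟨hzinf, ?_, ?_⟩
  · -- x ratio
    rw [← tendsto_add_atTop_iff_nat 1, tendsto_zero_iff_norm_tendsto_zero]
    apply squeeze_zero (fun n => norm_nonneg _)
      (g := fun n => 2 * A / (c * (‖((Hinv a b)^[n] w).2.2‖ *
        ‖((Hinv a b)^[n] w).2.2‖)))
    · intro n
      have step := key_step a b ha δ hδ hbδ R hR0 hRc _ (inv n).1
      have hit : (Hinv a b)^[n+1] w = Hinv a b ((Hinv a b)^[n] w) :=
        Function.iterate_succ_apply' _ _ _
      set Z := ‖((Hinv a b)^[n] w).2.2‖ with hZ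
      have hZ0 : 0 < Z := hzpos n
      have hZ'0 : 0 < ‖((Hinv a b)^[n+1] w).2.2‖ := hzpos (n+1)
      rw [hit, norm_div, step.2.2.2.2]
      rw [div_le_div_iff₀ (by rw [← hit]; exact hZ'0) (by positivity)]
      have h1 := step.2.2.1
      nlinarith [h1, hZ0]
    · apply Tendsto.div_atTop tendsto_const_nhds
      exact Tendsto.const_mul_atTop hc0 (hzinf.atTop_mul_atTop₀ hzinf)
  · -- y ratio
    rw [← tendsto_add_atTop_iff_nat 1, tendsto_zero_iff_norm_tendsto_zero]
    apply squeeze_zero (fun n => norm_nonneg _)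
      (g := fun n => 4 * A / (c * ‖((Hinv a b)^[n] w).2.2‖))
    · intro n
      have step := key_step a b ha δ hδ hbδ R hR0 hRc _ (inv n).1
      have hit : (Hinv a b)^[n+1] w = Hinv a b ((Hinv a b)^[n] w) :=
        Function.iterate_succ_apply' _ _ _
      set Z := ‖((Hinv a b)^[n] w).2.2‖ with hZ
      have hZ0 : 0 < Z := hzpos n
      have hZ'0 : 0 < ‖((Hinv a b)^[n+1] w).2.2‖ := hzpos (n+1)
      rw [hit, norm_div]
      rw [div_le_div_iff₀ (by rw [← hit]; exact hZ'0) (by positivity)]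
      have h1 := step.2.2.1
      have h2 := step.2.2.2.1
      have h3 : ‖(Hinv a b ((Hinv a b)^[n] w)).2.1‖ * (c * Z) ≤
          2 * Z ^ 2 * (c * Z) := by
        apply mul_le_mul_of_nonneg_right h2 (by positivity)
      nlinarith [h1, h3, hZ0]
    · apply Tendsto.div_atTop tendsto_const_nhds
      exact Tendsto.const_mul_atTop hc0 hzinf
end

section
/- Suppose b⁴ = 1 and c ∈ ℂ satisfies c² = −b. Then for every ε ∈ (0, 1/2], every R ≥ 10, every x ∈ ℂ and every n ≥ 0, the iterate Hⁿ(x, c) does not belong to V⁻ = {(x,y) ∈ ℂ² : |xy| > max{R, |x|^{3/2}, (1/ε)|y|^{3/2}}}; that is, the line {(x, c) : x ∈ ℂ} is contained in K⁺ = ℂ² \ ⋃_{n≥0} H⁻ⁿ(V⁻). -/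
open Complex Filter Topology

/-- The two-dimensional model map `H(x,y) = (xy, x² + by)` on `ℂ²`. -/
noncomputable def H2 (b : ℂ) (p : ℂ × ℂ) : ℂ × ℂ :=
  (p.1 * p.2, p.1 ^ 2 + b * p.2)

/-- The two-dimensional `V⁻ = {(x,y) : |xy| > max{R, |x|^{3/2}, (1/ε)|y|^{3/2}}}`. -/
noncomputable def Vminus2 (ε R : ℝ) : Set (ℂ × ℂ) :=
  {p | ‖p.1 * p.2‖ >
    max R (max ((‖p.1‖) ^ ((3 : ℝ) / 2))
      ((1 / ε) * (‖p.2‖) ^ ((3 : ℝ) / 2)))}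

lemma abs_b_one (b : ℂ) (hb4 : b ^ 4 = 1) : ‖b‖ = 1 := by
  have h := congrArg (fun z : ℂ => ‖z‖) hb4
  simp only [norm_pow, norm_one] at h
  have h0 : 0 ≤ ‖b‖ := norm_nonneg b
  have key : (‖b‖ - 1) *
      (‖b‖ ^ 3 + ‖b‖ ^ 2 + ‖b‖ + 1) = 0 := by
    have : ‖b‖ ^ 4 - 1 = (‖b‖ - 1) *
        (‖b‖ ^ 3 + ‖b‖ ^ 2 + ‖b‖ + 1) := by ring
    linarith [this]
  have hpos : 0 < ‖b‖ ^ 3 + ‖b‖ ^ 2 + ‖b‖ + 1 := by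
    positivity
  rcases mul_eq_zero.mp key with h' | h'
  · linarith
  · linarith

lemma abs_y_one (b y : ℂ) (hb4 : b ^ 4 = 1) (hy : y ^ 2 = -b) :
    ‖y‖ = 1 := by
  have hB : ‖b‖ = 1 := abs_b_one b hb4
  have h := congrArg (fun z : ℂ => ‖z‖) hy
  simp only [norm_pow, norm_neg, hB] at h
  nlinarith [norm_nonneg y]

lemma notV_even (ε R : ℝ) (hR : 10 ≤ R) (p : ℂ × ℂ)
    (hy : ‖p.2‖ = 1) : p ∉ Vminus2 ε R := by
  intro hp
  simp only [Vminus2, Set.mem_setOf_eq, gt_iff_lt, max_lt_iff] at hp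
  obtain ⟨h1, h2, _⟩ := hp
  have hA : ‖p.1 * p.2‖ = ‖p.1‖ := by
    rw [norm_mul, hy, mul_one]
  rw [hA] at h1 h2
  set t := ‖p.1‖ with ht
  have ht0 : 0 ≤ t := norm_nonneg p.1
  have ht1 : t < 1 := by
    by_contra h
    push_neg at h
    have : t ≤ t ^ ((3:ℝ)/2) := by
      calc t = t ^ (1:ℝ) := (Real.rpow_one t).symm
      _ ≤ t ^ ((3:ℝ)/2) := Real.rpow_le_rpow_of_exponent_le h (by norm_num)
    linarith
  linarith

lemma notV_odd (b : ℂ) (ε R : ℝ) (hε : 0 < ε) (hε2 : ε ≤ 1/2) (hR : 10 ≤ R)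
    (hB : ‖b‖ = 1) (p : ℂ × ℂ) (hy : ‖p.2‖ = 1) :
    H2 b p ∉ Vminus2 ε R := by
  intro hp
  simp only [H2, Vminus2, Set.mem_setOf_eq, gt_iff_lt, max_lt_iff] at hp
  obtain ⟨h1, _, h3⟩ := hp
  set t := ‖p.1‖ with htdef
  set s := ‖p.1 ^ 2 + b * p.2‖ with hsdef
  have ht0 : 0 ≤ t := norm_nonneg p.1
  have hs0 : 0 ≤ s := norm_nonneg _
  have hA : ‖p.1 * p.2 * (p.1 ^ 2 + b * p.2)‖ = t * s := by
    rw [norm_mul, norm_mul, hy, mul_one]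
  rw [hA] at h1 h3
  -- triangle inequalities
  have habs2 : ‖b * p.2‖ = 1 := by rw [norm_mul, hB, hy, mul_one]
  have hlo : t ^ 2 - 1 ≤ s := by
    have : ‖p.1 ^ 2‖ ≤ s + ‖b * p.2‖ := by
      calc ‖p.1 ^ 2‖
          = ‖(p.1 ^ 2 + b * p.2) + (-(b * p.2))‖ := by ring_nf
      _ ≤ s + ‖-(b * p.2)‖ := norm_add_le _ _
      _ = s + ‖b * p.2‖ := by rw [norm_neg]
    rw [norm_pow, habs2] at this
    linarith
  have hhi : s ≤ t ^ 2 + 1 := by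
    have : s ≤ ‖p.1 ^ 2‖ + ‖b * p.2‖ :=
      norm_add_le _ _
    rw [norm_pow, habs2] at this
    linarith
  -- 1/ε ≥ 2
  have hinv : (2:ℝ) ≤ 1 / ε := by
    rw [le_div_iff₀ hε]; linarith
  have hrpow0 : 0 ≤ s ^ ((3:ℝ)/2) := Real.rpow_nonneg hs0 _
  have h3' : 2 * s ^ ((3:ℝ)/2) < t * s := by nlinarith
  have hspos : 0 < s := by
    rcases lt_or_eq_of_le hs0 with h | h
    · exact h
    · exfalso; rw [← h] at h1; simp at h1; linarith
  have hsqrt : s ^ ((3:ℝ)/2) = s * Real.sqrt s := by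
    rw [Real.sqrt_eq_rpow, show (3:ℝ)/2 = 1 + 1/2 by norm_num,
      Real.rpow_add hspos, Real.rpow_one]
  rw [hsqrt] at h3'
  have h2u : 2 * Real.sqrt s < t := by
    have hform : (2 * Real.sqrt s) * s < t * s := by linarith [h3']
    exact lt_of_mul_lt_mul_right hform hs0
  have hsq : Real.sqrt s ^ 2 = s := Real.sq_sqrt hs0
  have hu0 : 0 ≤ Real.sqrt s := Real.sqrt_nonneg s
  have ht2 : 4 * s < t ^ 2 := by nlinarith
  have ht43 : t ^ 2 < 4 / 3 := by linarith
  have ht2' : t < 2 := by nlinarith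
  have hs73 : s < 7 / 3 := by linarith
  nlinarith

lemma even_iter (b c : ℂ) (hb4 : b ^ 4 = 1) (hc : c ^ 2 = -b) (x : ℂ) (k : ℕ) :
    (((H2 b)^[2 * k] (x, c)).2) ^ 2 = -b := by
  induction k with
  | zero => simpa using hc
  | succ k ih =>
    have h2k : 2 * (k + 1) = 2 + 2 * k := by ring
    rw [h2k, Function.iterate_add_apply]
    set q := (H2 b)^[2 * k] (x, c) with hq
    show ((H2 b (H2 b q)).2) ^ 2 = -b
    simp only [H2]
    have h2 : (q.1 * q.2) ^ 2 + b * (q.1 ^ 2 + b * q.2) = b ^ 2 * q.2 := by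
      linear_combination q.1 ^ 2 * ih
    rw [h2]
    calc (b ^ 2 * q.2) ^ 2 = b ^ 4 * q.2 ^ 2 := by ring
    _ = -b := by rw [hb4, one_mul, ih]

/-- if `b⁴ = 1` and `c² = −b`, then for every `ε ∈ (0, 1/2]`,
every `R ≥ 10`, every `x ∈ ℂ` and every `n ≥ 0`, the iterate `Hⁿ(x, c)` does
not belong to `V⁻`; that is, the line `{(x, c) : x ∈ ℂ}` is contained in
`K⁺ = ℂ² \ ⋃_{n≥0} H⁻ⁿ(V⁻)`. -/
theorem stmt19 (b : ℂ) (hb : b ≠ 0) (hb4 : b ^ 4 = 1) (c : ℂ)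
    (hc : c ^ 2 = -b) (ε : ℝ) (hε : 0 < ε) (hε2 : ε ≤ 1 / 2)
    (R : ℝ) (hR : 10 ≤ R) (x : ℂ) (n : ℕ) :
    (H2 b)^[n] (x, c) ∉ Vminus2 ε R := by
  have hB : ‖b‖ = 1 := abs_b_one b hb4
  rcases Nat.even_or_odd n with ⟨k, hk⟩ | ⟨k, hk⟩
  · have hk' : n = 2 * k := by omega
    subst hk'
    have hy2 := even_iter b c hb4 hc x k
    exact notV_even ε R hR _ (abs_y_one b _ hb4 hy2)
  · have hk' : n = 2 * k + 1 := by omega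
    subst hk'
    rw [Function.iterate_succ_apply']
    have hy2 := even_iter b c hb4 hc x k
    exact notV_odd b ε R hε hε2 hR hB _ (abs_y_one b _ hb4 hy2)
end
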